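/- Let k be an infinite field and let M be an m×n matrix whose entries are polynomials in k[T_1,…,T_N]. Then the rank of M, viewed as a matrix over the rational function field k(T_1,…,T_N), equals the maximum over all points t ∈ k^N of the rank over k of the specialized matrix M(t) obtained by evaluating every entry at t. -/

import Mathlib

open Matrix Module Submodule

section Aux

variable {K : Type*} [Field K]

/-- The rank of any submatrix is at most the rank of the matrix. -/
lemma aux_rank_submatrix_le {m n r s : Type*} [Fintype m] [Fintype n] [Fintype r] [Fintype s]
    (A : Matrix m n K) (f : r → m) (g : s → n) :
    (A.submatrix f g).rank ≤ A.rank := by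
  classical
  rw [Matrix.rank_eq_finrank_span_row, Matrix.rank_eq_finrank_span_row]
  have hsub : Submodule.span K (Set.range (A.submatrix f g)) ≤
      (Submodule.span K (Set.range A)).map (LinearMap.funLeft K K g) := by
    rw [Submodule.map_span]
    apply Submodule.span_mono
    rintro _ ⟨x, rfl⟩
    exact ⟨A (f x), ⟨f x, rfl⟩, rfl⟩
  exact (Submodule.finrank_mono hsub).trans (Submodule.finrank_map_le _ _)

/-- One can select `rank` many rows of a matrix which are linearly independent. -/
lemma aux_exists_rows {m n : Type*} [Fintype m] [Fintype n]
    (A : Matrix m n K) (r : ℕ) (hr : A.rank = r) :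
    ∃ f : Fin r → m, LinearIndependent K (fun x => A (f x)) := by
  classical
  obtain ⟨t, hts, hspan, hli⟩ := exists_linearIndependent K (Set.range A)
  have htfin : t.Finite := (Set.finite_range A).subset hts
  haveI : Fintype t := htfin.fintype
  have hcard : t.toFinset.card = r := by
    rw [← finrank_span_set_eq_card hli, hspan]
    exact (Matrix.rank_eq_finrank_span_row A).symm.trans hr
  have e : Fin r ≃ t := by
    apply Fintype.equivOfCardEq
    rw [Fintype.card_fin, ← Set.toFinset_card, hcard]
  have hpre : ∀ x : Fin r, ∃ i : m, A i = (e x : n → K) := fun x => hts (e x).2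
  choose f hf using hpre
  refine ⟨f, ?_⟩
  have : (fun x => A (f x)) = (fun v : t => (v : n → K)) ∘ e := by
    funext x; simp [hf]
  rw [this]
  exact hli.comp e e.injective

/-- A matrix of rank `r` has an invertible `r × r` submatrix. -/
lemma aux_exists_submatrix_det_ne_zero {m n : Type*} [Fintype m] [Fintype n]
    (A : Matrix m n K) (r : ℕ) (hr : A.rank = r) :
    ∃ f : Fin r → m, ∃ g : Fin r → n, (A.submatrix f g).det ≠ 0 := by
  classical
  obtain ⟨f, hf⟩ := aux_exists_rows A r hr
  set B : Matrix (Fin r) n K := A.submatrix f id with hB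
  have hBli : LinearIndependent K B := hf
  have hBrank : Bᵀ.rank = r := by
    rw [Matrix.rank_transpose]
    exact hBli.rank_matrix.trans (Fintype.card_fin r)
  obtain ⟨g, hg⟩ := aux_exists_rows Bᵀ r hBrank
  refine ⟨f, g, ?_⟩
  have hcols : LinearIndependent K (fun y => (A.submatrix f g)ᵀ y) := by
    have : (fun y => (A.submatrix f g)ᵀ y) = fun y => Bᵀ (g y) := by
      funext y; funext x; rfl
    rwa [this]
  have hunit : IsUnit (A.submatrix f g) :=
    Matrix.linearIndependent_cols_iff_isUnit.mp hcols
  exact isUnit_iff_ne_zero.mp ((Matrix.isUnit_iff_isUnit_det _).mp hunit)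

/-- If a matrix has an `r × r` submatrix with nonzero determinant, its rank is at least `r`. -/
lemma aux_rank_ge_of_det_ne_zero {m n : Type*} [Fintype m] [Fintype n]
    (A : Matrix m n K) (r : ℕ) (f : Fin r → m) (g : Fin r → n)
    (h : (A.submatrix f g).det ≠ 0) : r ≤ A.rank := by
  have hunit : IsUnit (A.submatrix f g) :=
    (Matrix.isUnit_iff_isUnit_det _).mpr (isUnit_iff_ne_zero.mpr h)
  have := Matrix.rank_of_isUnit _ hunit
  rw [Fintype.card_fin] at this
  calc r = (A.submatrix f g).rank := this.symm
    _ ≤ A.rank := aux_rank_submatrix_le A f g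

end Aux

/-- Let `k` be an infinite field and `M` an `m × n` matrix with entries in
`k[T_1,…,T_N]`.  Then the rank of `M` over the rational function field
`k(T_1,…,T_N)` equals the maximum over all points `t ∈ k^N` of the rank over `k`
of the specialized matrix `M(t)`. -/
theorem rank_over_function_field_eq_max_rank_of_specializations
    (k : Type*) [Field k] [Infinite k] (m n N : ℕ)
    (M : Matrix (Fin m) (Fin n) (MvPolynomial (Fin N) k)) :
    (M.map (algebraMap (MvPolynomial (Fin N) k)
        (FractionRing (MvPolynomial (Fin N) k)))).rank =
      ⨆ t : Fin N → k, (M.map (MvPolynomial.eval t)).rank := by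
  classical
  set φ : MvPolynomial (Fin N) k →+* FractionRing (MvPolynomial (Fin N) k) :=
    algebraMap _ _ with hφ
  have hφinj : Function.Injective φ := IsFractionRing.injective (MvPolynomial (Fin N) k) (FractionRing (MvPolynomial (Fin N) k))
  set MK := M.map φ with hMK
  -- every specialization has rank at most the generic rank
  have key₁ : ∀ t : Fin N → k, (M.map (MvPolynomial.eval t)).rank ≤ MK.rank := by
    intro t
    obtain ⟨f, g, hdet⟩ :=
      aux_exists_submatrix_det_ne_zero (M.map (MvPolynomial.eval t))
        (M.map (MvPolynomial.eval t)).rank rfl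
    apply aux_rank_ge_of_det_ne_zero MK _ f g
    have hcomm : (MK.submatrix f g).det = φ ((M.submatrix f g).det) := by
      rw [RingHom.map_det]
      congr 1
    have hcomm' : ((M.map (MvPolynomial.eval t)).submatrix f g).det =
        MvPolynomial.eval t ((M.submatrix f g).det) := by
      rw [RingHom.map_det]
      congr 1
    rw [hcomm]
    intro hzero
    have : (M.submatrix f g).det = 0 := hφinj (by simpa using hzero)
    rw [hcomm', this] at hdet
    simp at hdet
  -- there is a specialization achieving the generic rank
  have key₂ : ∃ t : Fin N → k, MK.rank ≤ (M.map (MvPolynomial.eval t)).rank := by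
    obtain ⟨f, g, hdet⟩ := aux_exists_submatrix_det_ne_zero MK MK.rank rfl
    have hcomm : (MK.submatrix f g).det = φ ((M.submatrix f g).det) := by
      rw [RingHom.map_det]
      congr 1
    have hp : (M.submatrix f g).det ≠ 0 := by
      intro h
      rw [hcomm, h, map_zero] at hdet
      exact hdet rfl
    -- find a point where the polynomial determinant does not vanish
    have : ∃ t : Fin N → k, MvPolynomial.eval t ((M.submatrix f g).det) ≠ 0 := by
      by_contra hall
      push_neg at hall
      exact hp (MvPolynomial.funext fun x => by simpa using hall x)
    obtain ⟨t, ht⟩ := this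
    refine ⟨t, aux_rank_ge_of_det_ne_zero _ _ f g ?_⟩
    have hcomm' : ((M.map (MvPolynomial.eval t)).submatrix f g).det =
        MvPolynomial.eval t ((M.submatrix f g).det) := by
      rw [RingHom.map_det]
      congr 1
    rw [hcomm']
    exact ht
  -- conclude
  have hbdd : BddAbove (Set.range fun t : Fin N → k => (M.map (MvPolynomial.eval t)).rank) := by
    refine ⟨MK.rank, ?_⟩
    rintro _ ⟨t, rfl⟩
    exact key₁ t
  apply le_antisymm
  · obtain ⟨t, ht⟩ := key₂
    exact ht.trans (le_ciSup hbdd t)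
  · exact ciSup_le key₁
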